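/- Consider the symmetric two-population SIS model with real parameters τ, β, γ, d₁, d₂, h₁, and suppose y is a real number satisfying the branch relation τ(d₁+d₂)(1−y) = γ − βh₁y(1−y). Then the transverse eigenvalue λ⊥(y) = τ(d₁−d₂) − γ + 2(βh₁ − τd₁)y − 3βh₁y² satisfies the identity λ⊥(y)·(d₁+d₂)(1−y) = −(2γd₂ + (d₁−d₂)γy − (d₁+3d₂)βh₁y(1−y)²). In particular, if d₁+d₂ > 0 and y ∈ (0,1), then λ⊥(y) = 0 (a pitchfork/symmetry-breaking point on the symmetric branch) if and only if 2γd₂ + (d₁−d₂)γy − (d₁+3d₂)βh₁y(1−y)² = 0. -/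
import Mathlib


/-- On the nontrivial symmetric branch
`τ(d₁+d₂)(1−y) = γ − βh₁y(1−y)` of the symmetric two-population SIS model, the
transverse eigenvalue `λ⊥(y) = τ(d₁−d₂) − γ + 2(βh₁ − τd₁)y − 3βh₁y²` satisfies
`λ⊥(y)·(d₁+d₂)(1−y) = −(2γd₂ + (d₁−d₂)γy − (d₁+3d₂)βh₁y(1−y)²)`; in particular,
if `d₁+d₂ > 0` and `y ∈ (0,1)`, then `λ⊥(y) = 0` (a pitchfork point) iff
`2γd₂ + (d₁−d₂)γy − (d₁+3d₂)βh₁y(1−y)² = 0`. -/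
theorem symmetric_branch_pitchfork_condition (τ β γ d₁ d₂ h₁ : ℝ)
    (lamPerp : ℝ → ℝ)
    (hPerp : ∀ z : ℝ, lamPerp z =
      τ * (d₁ - d₂) - γ + 2 * (β * h₁ - τ * d₁) * z - 3 * β * h₁ * z ^ 2)
    (y : ℝ)
    (hbranch : τ * (d₁ + d₂) * (1 - y) = γ - β * h₁ * y * (1 - y)) :
    lamPerp y * ((d₁ + d₂) * (1 - y)) =
      -(2 * γ * d₂ + (d₁ - d₂) * γ * y - (d₁ + 3 * d₂) * β * h₁ * y * (1 - y) ^ 2) ∧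
    (0 < d₁ + d₂ → y ∈ Set.Ioo (0 : ℝ) 1 →
      (lamPerp y = 0 ↔
        2 * γ * d₂ + (d₁ - d₂) * γ * y - (d₁ + 3 * d₂) * β * h₁ * y * (1 - y) ^ 2 = 0)) := by
  have key : lamPerp y * ((d₁ + d₂) * (1 - y)) =
      -(2 * γ * d₂ + (d₁ - d₂) * γ * y - (d₁ + 3 * d₂) * β * h₁ * y * (1 - y) ^ 2) := by
    rw [hPerp y]
    linear_combination ((d₁ - d₂) - 2 * d₁ * y) * hbranch
  refine ⟨key, fun hd hy => ?_⟩
  have hne : (d₁ + d₂) * (1 - y) ≠ 0 :=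
    mul_ne_zero (ne_of_gt hd) (by nlinarith [hy.2])
  constructor
  · intro h0
    have := key
    rw [h0, zero_mul] at this
    linarith [this]
  · intro h0
    have : lamPerp y * ((d₁ + d₂) * (1 - y)) = 0 := by rw [key, h0]; ring
    rcases mul_eq_zero.mp this with h | h
    · exact h
    · exact absurd h hne
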